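/- Let p be a prime, g a primitive root mod p, K the left-circulant (p-1)×(p-1) matrix with entries k_{s+l} = K(g^{s+l}) + p + 1 (subscripts mod p-1), and K' the left-circulant matrix with entries K(g^{s+l}). Then det K = p^2 · det K'. -/

import Mathlib

/-- The Kloosterman sum over the prime field `F_p`. -/
noncomputable def kloosterman (p : ℕ) [Fact p.Prime] (u : ZMod p) : ℂ :=
  ∑ x ∈ (Finset.univ \ {0} : Finset (ZMod p)),
    Complex.exp (2 * Real.pi * Complex.I * ((x + u * x⁻¹).val : ℂ) / p)

open Finset

namespace KloostermanAux

noncomputable def zeta (p : ℕ) : ℂ := Complex.exp (2 * Real.pi * Complex.I / p)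

variable (p : ℕ) [Fact p.Prime]

lemma zeta_prim : IsPrimitiveRoot (zeta p) p :=
  Complex.isPrimitiveRoot_exp p (Fact.out : p.Prime).ne_zero

lemma zeta_pow_mod (k : ℕ) : zeta p ^ (k % p) = zeta p ^ k := by
  conv_rhs => rw [← Nat.div_add_mod k p]
  rw [pow_add, pow_mul, (zeta_prim p).pow_eq_one, one_pow, one_mul]

lemma zeta_pow_val_add (a b : ZMod p) :
    zeta p ^ (a + b).val = zeta p ^ a.val * zeta p ^ b.val := by
  rw [ZMod.val_add, zeta_pow_mod, pow_add]

lemma exp_eq_zeta (a : ZMod p) :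
    Complex.exp (2 * Real.pi * Complex.I * (a.val : ℂ) / p) = zeta p ^ a.val := by
  rw [zeta, ← Complex.exp_nat_mul]
  ring_nf

lemma sum_zeta_all : ∑ x : ZMod p, zeta p ^ x.val = 0 := by
  have hp : 1 < p := (Fact.out : p.Prime).one_lt
  have h := (zeta_prim p).geom_sum_eq_zero hp
  rw [← h]
  refine Finset.sum_nbij' (fun x => x.val) (fun i => (i : ZMod p)) ?_ ?_ ?_ ?_ ?_
  · intro a _; exact Finset.mem_range.mpr (ZMod.val_lt a)
  · intro i _; exact Finset.mem_univ _
  · intro a _; exact ZMod.natCast_rightInverse a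
  · intro i hi; exact ZMod.val_cast_of_lt (Finset.mem_range.mp hi)
  · intro a _; rfl

lemma sum_zeta_ne_zero : ∑ x ∈ (Finset.univ \ {0} : Finset (ZMod p)), zeta p ^ x.val = -1 := by
  have h0 : ({0} : Finset (ZMod p)) ⊆ Finset.univ := Finset.subset_univ _
  rw [Finset.sum_sdiff_eq_sub h0, sum_zeta_all, Finset.sum_singleton, ZMod.val_zero, pow_zero]
  ring

lemma sum_kloosterman :
    ∑ u ∈ (Finset.univ \ {0} : Finset (ZMod p)), kloosterman p u = 1 := by
  unfold kloosterman
  simp_rw [exp_eq_zeta, zeta_pow_val_add]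
  rw [Finset.sum_comm]
  have inner : ∀ x ∈ (Finset.univ \ {0} : Finset (ZMod p)),
      ∑ u ∈ (Finset.univ \ {0} : Finset (ZMod p)), zeta p ^ x.val * zeta p ^ (u * x⁻¹).val
      = zeta p ^ x.val * (-1) := by
    intro x hx
    have hx0 : x ≠ 0 := by simpa using (Finset.mem_sdiff.mp hx).2
    rw [← Finset.mul_sum]
    congr 1
    rw [← sum_zeta_ne_zero p]
    refine Finset.sum_nbij' (fun u => u * x⁻¹) (fun y => y * x) ?_ ?_ ?_ ?_ ?_
    · intro u hu
      have hu0 : u ≠ 0 := by simpa using (Finset.mem_sdiff.mp hu).2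
      simp [Finset.mem_sdiff, mul_ne_zero hu0 (inv_ne_zero hx0)]
    · intro y hy
      have hy0 : y ≠ 0 := by simpa using (Finset.mem_sdiff.mp hy).2
      simp [Finset.mem_sdiff, mul_ne_zero hy0 hx0]
    · intro u _; field_simp
    · intro y _; field_simp
    · intro u _; rfl
  rw [Finset.sum_congr rfl inner]
  rw [← Finset.sum_mul, sum_zeta_ne_zero]
  ring

lemma row_sum (g : (ZMod p)ˣ) (hg : orderOf g = p - 1) (a : ℕ) :
    ∑ l : Fin (p - 1), kloosterman p ((g : ZMod p) ^ ((a + l.val) % (p - 1))) = 1 := by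
  have hp : 1 < p := (Fact.out : p.Prime).one_lt
  have hn : 0 < p - 1 := by omega
  -- the exponent map is injective
  have hexp_inj : Function.Injective (fun l : Fin (p - 1) =>
      (⟨(a + l.val) % (p - 1), Nat.mod_lt _ hn⟩ : Fin (p - 1))) := by
    intro l l' h
    have h' : (a + l.val) % (p - 1) = (a + l'.val) % (p - 1) := congrArg Fin.val h
    have := Nat.ModEq.add_left_cancel' a h'
    exact Fin.ext (by rwa [Nat.ModEq, Nat.mod_eq_of_lt l.isLt, Nat.mod_eq_of_lt l'.isLt] at this)
  have hexp_surj := Finite.injective_iff_surjective.mp hexp_inj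
  -- powers of g are injective on Fin (p-1)
  have hpow_inj : Function.Injective (fun k : Fin (p - 1) => g ^ k.val) := by
    intro k k' h
    have := pow_eq_pow_iff_modEq.mp h
    rw [hg, Nat.ModEq, Nat.mod_eq_of_lt k.isLt, Nat.mod_eq_of_lt k'.isLt] at this
    exact Fin.ext this
  have hcard : Fintype.card (Fin (p - 1)) = Fintype.card (ZMod p)ˣ := by
    rw [Fintype.card_fin, ZMod.card_units]
  have hpow_surj : Function.Surjective (fun k : Fin (p - 1) => g ^ k.val) :=
    ((Fintype.bijective_iff_injective_and_card _).mpr ⟨hpow_inj, hcard⟩).2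
  rw [← sum_kloosterman p]
  refine Finset.sum_nbij (fun l => (g : ZMod p) ^ ((a + l.val) % (p - 1))) ?_ ?_ ?_ ?_
  · intro l _
    rw [← Units.val_pow_eq_pow_val]
    simp [Finset.mem_sdiff, Units.ne_zero]
  · intro l _ l' _ h
    have h2 : ((g ^ ((a + l.val) % (p - 1)) : (ZMod p)ˣ) : ZMod p)
        = ((g ^ ((a + l'.val) % (p - 1)) : (ZMod p)ˣ) : ZMod p) := by push_cast at h ⊢; exact h
    have h3 := Units.ext h2
    have := pow_eq_pow_iff_modEq.mp h3
    rw [hg, Nat.ModEq, Nat.mod_eq_of_lt (Nat.mod_lt _ hn), Nat.mod_eq_of_lt (Nat.mod_lt _ hn)] at this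
    have h4 := Nat.ModEq.add_left_cancel' a this
    exact Fin.ext (by rwa [Nat.ModEq, Nat.mod_eq_of_lt l.isLt, Nat.mod_eq_of_lt l'.isLt] at h4)
  · intro u hu
    have hu0 : u ≠ 0 := by simpa using (Finset.mem_sdiff.mp hu).2
    have huu : IsUnit u := isUnit_iff_ne_zero.mpr hu0
    obtain ⟨v, hv⟩ := huu
    obtain ⟨k, hk⟩ := hpow_surj v
    obtain ⟨l, hl⟩ := hexp_surj k
    refine ⟨l, Finset.mem_coe.mpr (Finset.mem_univ _), ?_⟩
    have hl' : (a + l.val) % (p - 1) = k.val := congrArg Fin.val hl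
    dsimp only
    rw [hl', ← hv, ← hk, ← Units.val_pow_eq_pow_val]
  · intro l _; rfl

end KloostermanAux

theorem det_shifted_kloosterman_circulant (p : ℕ) [Fact p.Prime] (g : (ZMod p)ˣ)
    (hg : orderOf g = p - 1) :
    Matrix.det (Matrix.of fun s l : Fin (p - 1) =>
        kloosterman p ((g : ZMod p) ^ ((s.val + l.val) % (p - 1))) + p + 1) =
      (p : ℂ) ^ 2 * Matrix.det (Matrix.of fun s l : Fin (p - 1) =>
        kloosterman p ((g : ZMod p) ^ ((s.val + l.val) % (p - 1)))) := by
  have hp : 1 < p := (Fact.out : p.Prime).one_lt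
  have hn : 0 < p - 1 := by omega
  haveI : NeZero (p - 1) := ⟨hn.ne'⟩
  set n := p - 1 with hn_def
  set A : Matrix (Fin n) (Fin n) ℂ := Matrix.of fun s l : Fin n =>
    kloosterman p ((g : ZMod p) ^ ((s.val + l.val) % n)) with hA
  set B : Matrix (Fin n) (Fin n) ℂ := Matrix.of fun s l : Fin n =>
    kloosterman p ((g : ZMod p) ^ ((s.val + l.val) % n)) + p + 1 with hB
  have hcast : ((n : ℕ) : ℂ) = (p : ℂ) - 1 := by
    rw [hn_def, Nat.cast_sub hp.le, Nat.cast_one]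
  -- column sums of A are 1
  have hcol : ∀ j : Fin n, ∑ s : Fin n, A s j = 1 := by
    intro j
    have h1 := KloostermanAux.row_sum p g hg j.val
    rw [← h1]
    exact Finset.sum_congr rfl fun s _ => by rw [hA]; simp only [Matrix.of_apply]; rw [Nat.add_comm]
  have i0 : Fin n := ⟨0, hn⟩
  -- step: det A = det (updateRow A i0 ones)
  have hsumA : (∑ k : Fin n, A k) = fun _ => (1 : ℂ) := by
    funext j
    refine (Finset.sum_apply j _ _).trans ?_
    exact hcol j
  have stepA : (Matrix.updateRow A i0 (fun _ => (1 : ℂ))).det = A.det := by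
    have := Matrix.det_updateRow_sum A i0 (fun _ => (1 : ℂ))
    simp only [one_smul, smul_eq_mul, one_mul] at this
    rw [← this, hsumA]
  -- step: det B = det (updateRow B i0 (fun _ => p^2))
  have hsumB : (∑ k : Fin n, B k) = fun _ => ((p : ℂ) ^ 2) := by
    funext j
    refine (Finset.sum_apply j _ _).trans ?_
    have : ∀ k : Fin n, B k j = A k j + ((p : ℂ) + 1) := by
      intro k; rw [hA, hB]; simp only [Matrix.of_apply]; ring
    rw [Finset.sum_congr rfl fun k _ => this k, Finset.sum_add_distrib, hcol j,
      Finset.sum_const, Finset.card_univ, Fintype.card_fin, nsmul_eq_mul, hcast]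
    ring
  have stepB : (Matrix.updateRow B i0 (fun _ => ((p : ℂ) ^ 2))).det = B.det := by
    have := Matrix.det_updateRow_sum B i0 (fun _ => (1 : ℂ))
    simp only [one_smul, smul_eq_mul, one_mul] at this
    rw [← this, hsumB]
  -- step: factor p^2 out of the updated row
  have stepFactor : (Matrix.updateRow B i0 (fun _ => ((p : ℂ) ^ 2))).det
      = (p : ℂ) ^ 2 * (Matrix.updateRow B i0 (fun _ => (1 : ℂ))).det := by
    have h := Matrix.det_updateRow_smul B i0 ((p : ℂ) ^ 2) (fun _ => (1 : ℂ))
    have heq : ((p : ℂ) ^ 2 • fun _ : Fin n => (1 : ℂ)) = fun _ : Fin n => ((p : ℂ) ^ 2) := by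
      funext j; simp
    rw [heq] at h
    exact h
  -- step: row operations: subtract (p+1) times row i0
  have stepRows : (Matrix.updateRow B i0 (fun _ => (1 : ℂ))).det
      = (Matrix.updateRow A i0 (fun _ => (1 : ℂ))).det := by
    refine Matrix.det_eq_of_forall_row_eq_smul_add_const
      (fun i => if i = i0 then 0 else (p : ℂ) + 1) i0 (by simp) ?_
    intro i j
    by_cases h : i = i0
    · subst h; simp [Matrix.updateRow_self]
    · simp only [Matrix.updateRow_ne h, if_neg h, Matrix.updateRow_self]
      rw [hA, hB]; simp only [Matrix.of_apply]; ring
  calc B.det = (Matrix.updateRow B i0 (fun _ => ((p : ℂ) ^ 2))).det := stepB.symm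
    _ = (p : ℂ) ^ 2 * (Matrix.updateRow B i0 (fun _ => (1 : ℂ))).det := stepFactor
    _ = (p : ℂ) ^ 2 * (Matrix.updateRow A i0 (fun _ => (1 : ℂ))).det := by rw [stepRows]
    _ = (p : ℂ) ^ 2 * A.det := by rw [stepA]
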